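/- Let A_d be the real 4×4 matrix [[a11, a12, a13, 0], [0, a22, 0, a24], [0, 0, a33, a34], [α, 0, 0, -α]] with a11 < 0, a22 < 0, a33 < 0, a12 < 0, a13 < 0, a24 > 0, a34 > 0, α > 0, and suppose a11² > a33² > -a13·a34 and a11² > a22² > -a12·a24. Then every eigenvalue of A_d has negative real part. -/

import Mathlib

set_option maxHeartbeats 1000000

open Matrix Polynomial in
theorem charpoly_eval_aux (a11 a22 a33 a12 a13 a24 a34 α : ℝ) (μ : ℂ) :
    Polynomial.eval μ ((!![a11, a12, a13, 0; 0, a22, 0, a24; 0, 0, a33, a34; α, 0, 0, -α]).map (Complex.ofReal)).charpoly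
      = (μ - a11)*(μ - a22)*(μ - a33)*(μ + α) - α*(a12*a24*(μ - a33) + a13*a34*(μ - a22)) := by
  rw [Matrix.charpoly]
  simp [Matrix.det_succ_row_zero, Fin.sum_univ_succ, Matrix.charmatrix_apply, Matrix.map_apply,
    Matrix.submatrix_apply, Matrix.diagonal_apply, Fin.succAbove]
  ring

lemma re_div_real_aux (c : ℝ) (w : ℂ) : ((c : ℂ) / w).re = c * w.re / Complex.normSq w := by
  rw [Complex.div_re]
  simp

lemma neg_lt_neg_of_sq_aux (a b : ℝ) (ha : a < 0) (hb : b < 0) (h : b^2 > a^2) : -a < -b := by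
  nlinarith

lemma abs_div_lt_aux (a c d : ℝ) (hneg : a < 0) (hc : c < 0) (hnum : a^2 > -c) (hd : -a ≤ d) :
    -c / d < -a := by
  have hd0 : (0:ℝ) < d := by linarith
  rw [div_lt_iff₀ hd0]
  nlinarith

lemma case2_real_aux (a11 α x y r : ℝ)
    (h11 : a11 < 0) (hα : 0 < α) (hx : 0 ≤ x)
    (hy : (x - a11)*(x + α) < y*y)
    (hr0 : 0 ≤ r) (hr : r < 2*(-a11)*α)
    (hEq : ((x - a11)^2 + y^2)*((x + α)^2 + y^2) = r^2) : False := by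
  have hy2 : (-a11)*α < y^2 := by nlinarith
  have hy0 : 0 ≤ y^2 := sq_nonneg y
  have hs1 : a11^2 ≤ (x - a11)^2 := by nlinarith
  have hs2 : α^2 ≤ (x + α)^2 := by nlinarith
  have step : (a11^2 + y^2)*(α^2 + y^2) ≤ ((x - a11)^2 + y^2)*((x + α)^2 + y^2) := by nlinarith
  have ha : 0 < (y^2 - (-a11)*α) * (y^2 + (-a11)*α) := by
    apply mul_pos (by linarith) (by nlinarith)
  have hb : 0 ≤ (a11^2 + α^2 - 2*((-a11)*α)) * y^2 := by
    apply mul_nonneg (by nlinarith [sq_nonneg (a11 + α)]) hy0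
  have hc : 0 < 2*((-a11)*α)*(y^2 - (-a11)*α) := by
    apply mul_pos (by nlinarith) (by linarith)
  nlinarith [ha, hb, hc, step]

open Matrix in
theorem stmt_5 (a11 a22 a33 a12 a13 a24 a34 α : ℝ)
    (h11 : a11 < 0) (h22 : a22 < 0) (h33 : a33 < 0)
    (h12 : a12 < 0) (h13 : a13 < 0) (h24 : a24 > 0) (h34 : a34 > 0) (hα : α > 0)
    (h1 : a11^2 > a33^2) (h2 : a33^2 > -a13*a34)
    (h3 : a11^2 > a22^2) (h4 : a22^2 > -a12*a24)
    (Ad : Matrix (Fin 4) (Fin 4) ℝ)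
    (hAd : Ad = !![a11, a12, a13, 0; 0, a22, 0, a24; 0, 0, a33, a34; α, 0, 0, -α]) :
    ∀ μ : ℂ, (Ad.map (Complex.ofReal)).charpoly.IsRoot μ → μ.re < 0 := by
  subst hAd
  intro μ hroot
  by_contra hre
  push_neg at hre
  set x : ℝ := μ.re with hxdef
  set y : ℝ := μ.im with hydef
  -- the characteristic equation
  have h0 : (μ - a11)*(μ - a22)*(μ - a33)*(μ + α) - α*(a12*a24*(μ - a33) + a13*a34*(μ - a22)) = 0 := by
    rw [← charpoly_eval_aux]; exact hroot
  have hP : (μ - a11)*(μ - a22)*(μ - a33)*(μ + α) = α*(a12*a24*(μ - a33) + a13*a34*(μ - a22)) := by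
    linear_combination h0
  -- nonvanishing of μ - a22, μ - a33
  have hre22 : (μ - (a22:ℂ)).re = x - a22 := by simp [hxdef]
  have hre33 : (μ - (a33:ℂ)).re = x - a33 := by simp [hxdef]
  have hx22 : 0 < x - a22 := by linarith
  have hx33 : 0 < x - a33 := by linarith
  have hz22 : (μ - (a22:ℂ)) ≠ 0 := by
    intro h; rw [h] at hre22; simp at hre22; linarith
  have hz33 : (μ - (a33:ℂ)) ≠ 0 := by
    intro h; rw [h] at hre33; simp at hre33; linarith
  -- divided form
  have hE : (μ - a11)*(μ + α)
      = (α:ℂ)*((a12*a24 : ℝ)/(μ - a22) + ((a13*a34 : ℝ))/(μ - a33)) := by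
    field_simp
    push_cast
    ring_nf
    ring_nf at hP
    linear_combination hP
  -- real part of the RHS is negative
  have hN22 : 0 < Complex.normSq (μ - a22) := Complex.normSq_pos.mpr hz22
  have hN33 : 0 < Complex.normSq (μ - a33) := Complex.normSq_pos.mpr hz33
  have hu : (((a12*a24 : ℝ) : ℂ)/(μ - a22)).re = (a12*a24) * (x - a22) / Complex.normSq (μ - a22) := by
    rw [re_div_real_aux, hre22]
  have hv : (((a13*a34 : ℝ) : ℂ)/(μ - a33)).re = (a13*a34) * (x - a33) / Complex.normSq (μ - a33) := by
    rw [re_div_real_aux, hre33]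
  have hRre : ((α:ℂ)*((a12*a24 : ℝ)/(μ - a22) + ((a13*a34 : ℝ))/(μ - a33))).re
      = α * ((a12*a24) * (x - a22) / Complex.normSq (μ - a22)
            + (a13*a34) * (x - a33) / Complex.normSq (μ - a33)) := by
    rw [Complex.re_ofReal_mul, Complex.add_re, hu, hv]
  have hm1 : a12 * a24 < 0 := mul_neg_of_neg_of_pos h12 h24
  have hm2 : a13 * a34 < 0 := mul_neg_of_neg_of_pos h13 h34
  have hRneg : ((α:ℂ)*((a12*a24 : ℝ)/(μ - a22) + ((a13*a34 : ℝ))/(μ - a33))).re < 0 := by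
    rw [hRre]
    have t1 : (a12*a24) * (x - a22) / Complex.normSq (μ - a22) < 0 :=
      div_neg_of_neg_of_pos (mul_neg_of_neg_of_pos hm1 hx22) hN22
    have t2 : (a13*a34) * (x - a33) / Complex.normSq (μ - a33) < 0 :=
      div_neg_of_neg_of_pos (mul_neg_of_neg_of_pos hm2 hx33) hN33
    exact mul_neg_of_pos_of_neg hα (by linarith)
  -- real part of the LHS
  have hLre : ((μ - a11)*(μ + α)).re = (x - a11)*(x + α) - y*y := by
    simp [Complex.mul_re, hxdef, hydef]
  rcases le_or_gt (y*y) ((x - a11)*(x + α)) with hy | hy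
  · -- Case 1 : real part of LHS nonnegative
    have : ((μ - a11)*(μ + α)).re < 0 := hE ▸ hRneg
    rw [hLre] at this
    linarith
  · -- Case 2 : compare moduli
    have hlt22 : -a22 < -a11 := neg_lt_neg_of_sq_aux a22 a11 h22 h11 h3
    have hlt33 : -a33 < -a11 := neg_lt_neg_of_sq_aux a33 a11 h33 h11 h1
    have hb22 : -a22 ≤ ‖μ - a22‖ := le_trans (by linarith) (hre22 ▸ Complex.re_le_norm _)
    have hb33 : -a33 ≤ ‖μ - a33‖ := le_trans (by linarith) (hre33 ▸ Complex.re_le_norm _)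
    have hau : ‖((a12*a24 : ℝ) : ℂ)/(μ - a22)‖ < -a22 := by
      rw [norm_div, Complex.norm_real, Real.norm_eq_abs, abs_of_neg hm1]
      exact abs_div_lt_aux a22 (a12*a24) (‖μ - a22‖) h22 hm1 (by linarith) hb22
    have hav : ‖((a13*a34 : ℝ) : ℂ)/(μ - a33)‖ < -a33 := by
      rw [norm_div, Complex.norm_real, Real.norm_eq_abs, abs_of_neg hm2]
      exact abs_div_lt_aux a33 (a13*a34) (‖μ - a33‖) h33 hm2 (by linarith) hb33
    set cu : ℝ := ‖((a12*a24 : ℝ) : ℂ)/(μ - a22)‖ with hcu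
    set cv : ℝ := ‖((a13*a34 : ℝ) : ℂ)/(μ - a33)‖ with hcv
    have haR : ‖(α:ℂ)*((a12*a24 : ℝ)/(μ - a22) + ((a13*a34 : ℝ))/(μ - a33))‖
        < 2 * (-a11) * α := by
      rw [norm_mul, Complex.norm_real, Real.norm_eq_abs, abs_of_pos hα]
      have htr : ‖((a12*a24 : ℝ) : ℂ)/(μ - a22) + ((a13*a34 : ℝ))/(μ - a33)‖
          ≤ cu + cv := norm_add_le _ _
      have hsum : ‖((a12*a24 : ℝ) : ℂ)/(μ - a22) + ((a13*a34 : ℝ))/(μ - a33)‖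
          < 2 * (-a11) := by linarith
      have := mul_lt_mul_of_pos_left hsum hα
      linarith [this]
    have hnsE : ((x - a11)^2 + y^2)*((x + α)^2 + y^2)
        = (‖(α:ℂ)*((a12*a24 : ℝ)/(μ - a22) + ((a13*a34 : ℝ))/(μ - a33))‖)^2 := by
      rw [Complex.sq_norm, ← hE, Complex.normSq_mul]
      simp [Complex.normSq_apply]
      ring
    exact case2_real_aux a11 α x y _ h11 hα hre hy (norm_nonneg _)
      (by linarith) hnsE
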